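/- arXiv:1411.7775 — 4 statements merged into one kernel-verified Lean document; each statement's English description precedes it below -/
import Mathlib

section
/- Let K be a number field and α a nonzero rational number. Then α is the norm of a nonzero fractional ideal of K if and only if α > 0 and for every prime number p, the greatest common divisor of the residue degrees f_{𝔭/p} of the primes 𝔭 of K lying above p divides the p-adic valuation of α. -/
open NumberField
open scoped nonZeroDivisors

/-- The residue degree of a prime `P` of `𝓞 K` over the rational prime `p`. -/
noncomputable def resDeg (K : Type*) [Field K] [NumberField K] (p : ℕ) (P : Ideal (𝓞 K)) : ℕ :=
  Ideal.inertiaDeg' (Ideal.span {(p : ℤ)}) P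

/-- The multiset of prime ideals of `𝓞 K` above `p` (with multiplicity). -/
noncomputable def primesAbove (K : Type*) [Field K] [NumberField K] (p : ℕ) :
    Multiset (Ideal (𝓞 K)) :=
  UniqueFactorizationMonoid.normalizedFactors (Ideal.span {(p : 𝓞 K)})

/-- The gcd of the residue degrees of the primes of `𝓞 K` above `p`. -/
noncomputable def gcdResDeg (K : Type*) [Field K] [NumberField K] (p : ℕ) : ℕ :=
  ((primesAbove K p).map (resDeg K p)).gcd

/-! ### Auxiliary lemmas -/

lemma bezout_finset {ι : Type*} [DecidableEq ι] (S : Finset ι) (f : ι → ℕ) :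
    ∃ c : ι → ℤ, ∑ i ∈ S, c i * f i = (S.val.map f).gcd := by
  induction S using Finset.induction_on with
  | empty => exact ⟨0, by simp⟩
  | @insert a S ha ih =>
    obtain ⟨c, hc⟩ := ih
    set g : ℕ := (S.val.map f).gcd with hg
    refine ⟨fun i => if i = a then Nat.gcdA (f a) g else Nat.gcdB (f a) g * c i, ?_⟩
    rw [Finset.sum_insert ha, Finset.insert_val_of_notMem ha, Multiset.map_cons,
      Multiset.gcd_cons]
    have : ∑ i ∈ S, (if i = a then Nat.gcdA (f a) g else Nat.gcdB (f a) g * c i) * f i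
        = Nat.gcdB (f a) g * ∑ i ∈ S, c i * f i := by
      rw [Finset.mul_sum]
      refine Finset.sum_congr rfl fun i hi => ?_
      rw [if_neg (by rintro rfl; exact ha hi), mul_assoc]
    rw [this, hc]
    simp only [if_pos rfl, ← hg]
    have := Nat.gcd_eq_gcd_ab (f a) g
    have hnorm : gcd (f a) g = Nat.gcd (f a) g := rfl
    rw [hnorm]
    push_cast [this]
    ring

lemma prod_zpow_eq {ι : Type*} {x : ℚ} (hx : x ≠ 0) (S : Finset ι) (e : ι → ℤ) :
    ∏ i ∈ S, x ^ e i = x ^ (∑ i ∈ S, e i) := by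
  induction S using Finset.cons_induction_on with
  | empty => simp
  | cons _ _ ha ih => rw [Finset.prod_cons, Finset.sum_cons, ih, zpow_add₀ hx]

lemma nat_eq_prod_pow_padicValNat {a : ℕ} (ha : a ≠ 0) {S : Finset ℕ}
    (hS : a.primeFactors ⊆ S) (hSp : ∀ p ∈ S, p.Prime) :
    (a : ℚ) = ∏ p ∈ S, (p : ℚ) ^ (padicValNat p a : ℤ) := by
  have h1 : a = ∏ p ∈ S, p ^ (padicValNat p a) := by
    conv_lhs => rw [← Nat.factorization_prod_pow_eq_self ha]
    rw [Nat.prod_factorization_eq_prod_primeFactors]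
    rw [Finset.prod_subset hS]
    · exact Finset.prod_congr rfl fun p hp => by
        rw [Nat.factorization_def a (hSp p hp)]
    · intro p hp hnp
      rw [Nat.factorization_eq_zero_of_not_dvd, pow_zero]
      intro hdvd
      exact hnp (Nat.mem_primeFactors.mpr ⟨hSp p hp, hdvd, ha⟩)
  conv_lhs => rw [h1]
  rw [Nat.cast_prod]
  exact Finset.prod_congr rfl fun p hp => by rw [Nat.cast_pow, zpow_natCast]

lemma rat_eq_prod_pow_padicValRat {α : ℚ} (hpos : 0 < α) :
    α = ∏ p ∈ α.num.natAbs.primeFactors ∪ α.den.primeFactors,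
        (p : ℚ) ^ padicValRat p α := by
  set S := α.num.natAbs.primeFactors ∪ α.den.primeFactors with hSdef
  have hSp : ∀ p ∈ S, p.Prime := by
    intro p hp
    rcases Finset.mem_union.mp hp with h | h <;> exact Nat.prime_of_mem_primeFactors h
  have ha : α.num.natAbs ≠ 0 := Int.natAbs_ne_zero.mpr (Rat.num_ne_zero.mpr hpos.ne')
  have hb : α.den ≠ 0 := α.den_nz
  have hval : ∀ p ∈ S, padicValRat p α =
      (padicValNat p α.num.natAbs : ℤ) - (padicValNat p α.den : ℤ) := by
    intro p hp
    rfl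
  have hnum : ((α.num.natAbs : ℚ)) = ∏ p ∈ S, (p : ℚ) ^ (padicValNat p α.num.natAbs : ℤ) :=
    nat_eq_prod_pow_padicValNat ha Finset.subset_union_left hSp
  have hden : ((α.den : ℚ)) = ∏ p ∈ S, (p : ℚ) ^ (padicValNat p α.den : ℤ) :=
    nat_eq_prod_pow_padicValNat hb Finset.subset_union_right hSp
  have hα : α = (α.num.natAbs : ℚ) / (α.den : ℚ) := by
    rw [show ((α.num.natAbs : ℚ)) = ((α.num : ℤ) : ℚ) by
      rw [← Int.cast_natCast, Int.natAbs_of_nonneg (Rat.num_nonneg.mpr hpos.le)]]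
    exact (Rat.num_div_den α).symm
  rw [show (∏ p ∈ S, (p:ℚ) ^ padicValRat p α)
      = ∏ p ∈ S, (p:ℚ) ^ ((padicValNat p α.num.natAbs : ℤ) - (padicValNat p α.den : ℤ)) from
    Finset.prod_congr rfl fun p hp => by rw [hval p hp]]
  have : ∏ p ∈ S, (p:ℚ) ^ ((padicValNat p α.num.natAbs : ℤ) - (padicValNat p α.den : ℤ))
      = (∏ p ∈ S, (p:ℚ) ^ (padicValNat p α.num.natAbs : ℤ)) /
        (∏ p ∈ S, (p:ℚ) ^ (padicValNat p α.den : ℤ)) := by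
    rw [← Finset.prod_div_distrib]
    exact Finset.prod_congr rfl fun p hp =>
      zpow_sub₀ (Nat.cast_ne_zero.mpr (hSp p hp).ne_zero) _ _
  rw [this, ← hnum, ← hden, ← hα]

section NumberFieldLemmas

variable {K : Type*} [Field K] [NumberField K]

lemma span_p_ne_bot {p : ℕ} (hp : p.Prime) : Ideal.span {(p : 𝓞 K)} ≠ (⊥ : Ideal (𝓞 K)) := by
  simp [Ideal.span_singleton_eq_bot, Nat.cast_ne_zero.mpr hp.ne_zero]

lemma mem_primesAbove_iff {p : ℕ} (hp : p.Prime) {P : Ideal (𝓞 K)} :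
    P ∈ primesAbove K p ↔ Prime P ∧ P ∣ Ideal.span {(p : 𝓞 K)} := by
  rw [primesAbove, UniqueFactorizationMonoid.mem_normalizedFactors_iff (span_p_ne_bot hp)]

lemma spanZ_maximal {p : ℕ} (hp : p.Prime) : (Ideal.span {(p : ℤ)}).IsMaximal :=
  PrincipalIdealRing.isMaximal_of_irreducible (Nat.prime_iff_prime_int.mp hp).irreducible

lemma liesOver_of_mem_primesAbove {p : ℕ} (hp : p.Prime) {P : Ideal (𝓞 K)}
    (hP : P ∈ primesAbove K p) : P.LiesOver (Ideal.span {(p : ℤ)}) := by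
  obtain ⟨hPp, hdvd⟩ := (mem_primesAbove_iff hp).mp hP
  haveI hPrime : P.IsPrime := Ideal.isPrime_of_prime hPp
  constructor
  have hle : Ideal.span {(p : ℤ)} ≤ P.comap (algebraMap ℤ (𝓞 K)) := by
    rw [Ideal.span_le, Set.singleton_subset_iff]
    have : (p : 𝓞 K) ∈ P := (Ideal.span_le.mp (Ideal.le_of_dvd hdvd)) rfl
    simpa using this
  have hne : P.comap (algebraMap ℤ (𝓞 K)) ≠ ⊤ := (hPrime.comap _).ne_top
  rw [Ideal.under_def]
  exact ((spanZ_maximal hp).eq_of_le hne hle)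

set_option synthInstance.maxHeartbeats 1000000 in
set_option maxHeartbeats 1000000 in
lemma absNorm_of_mem_primesAbove {p : ℕ} (hp : p.Prime) {P : Ideal (𝓞 K)}
    (hP : P ∈ primesAbove K p) : Ideal.absNorm P = p ^ resDeg K p P := by
  obtain ⟨hPp, hdvd⟩ := (mem_primesAbove_iff hp).mp hP
  haveI hPrime : P.IsPrime := Ideal.isPrime_of_prime hPp
  haveI := liesOver_of_mem_primesAbove hp hP
  haveI := spanZ_maximal hp
  haveI : NeZero p := ⟨hp.ne_zero⟩
  rw [resDeg, Ideal.inertiaDeg'_algebraMap]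
  letI : Fintype ((𝓞 K) ⧸ P) := @Fintype.ofFinite _ (Ideal.finiteQuotientOfFreeOfNeBot P hPp.ne_zero)
  letI : Fintype (ℤ ⧸ Ideal.span {(p : ℤ)}) :=
    Fintype.ofEquiv (ZMod p) (Int.quotientSpanNatEquivZMod p).symm.toEquiv
  letI : Field (ℤ ⧸ Ideal.span {(p : ℤ)}) := Ideal.Quotient.field _
  have hcard : Fintype.card (ℤ ⧸ Ideal.span {(p : ℤ)}) = p :=
    (Fintype.card_congr (Int.quotientSpanNatEquivZMod p).toEquiv).trans (ZMod.card p)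
  have key := Module.card_eq_pow_finrank (K := ℤ ⧸ Ideal.span {(p : ℤ)}) (V := (𝓞 K) ⧸ P)
  rw [Ideal.absNorm_apply, Submodule.cardQuot_apply, Nat.card_eq_fintype_card, key, hcard]

lemma exists_mem_primesAbove {P : Ideal (𝓞 K)} (hP : Prime P) :
    ∃ q : ℕ, q.Prime ∧ P ∈ primesAbove K q := by
  haveI hPrime : P.IsPrime := Ideal.isPrime_of_prime hP
  have hN0 : Ideal.absNorm P ≠ 0 := by
    haveI := @Fintype.ofFinite _ (Ideal.finiteQuotientOfFreeOfNeBot P hP.ne_zero)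
    exact (Ideal.absNorm_ne_zero_iff P).mpr (Finite.of_fintype _)
  have hcne : P.comap (algebraMap ℤ (𝓞 K)) ≠ ⊥ := by
    intro h
    have hmem : ((Ideal.absNorm P : ℤ)) ∈ P.comap (algebraMap ℤ (𝓞 K)) := by
      simp only [Ideal.mem_comap, map_natCast]
      exact Ideal.absNorm_mem P
    rw [h, Ideal.mem_bot] at hmem
    exact hN0 (by exact_mod_cast hmem)
  obtain ⟨g, hg⟩ := (IsPrincipalIdealRing.principal (P.comap (algebraMap ℤ (𝓞 K)))).principal
  rw [Ideal.submodule_span_eq] at hg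
  have hg0 : g ≠ 0 := by rintro rfl; rw [hg] at hcne; simp at hcne
  have hgprime : Prime g :=
    (Ideal.span_singleton_prime hg0).mp (hg ▸ (hPrime.comap (algebraMap ℤ (𝓞 K))))
  refine ⟨g.natAbs, Int.prime_iff_natAbs_prime.mp hgprime, ?_⟩
  rw [mem_primesAbove_iff (Int.prime_iff_natAbs_prime.mp hgprime)]
  refine ⟨hP, Ideal.dvd_iff_le.mpr ?_⟩
  rw [Ideal.span_le, Set.singleton_subset_iff]
  have : (g.natAbs : ℤ) ∈ P.comap (algebraMap ℤ (𝓞 K)) := by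
    rw [hg]
    exact Ideal.mem_span_singleton.mpr (Int.dvd_natAbs.mpr dvd_rfl)
  have := Ideal.mem_comap.mp this
  rwa [eq_intCast, Int.cast_natCast] at this

lemma gcd_dvd_padicValNat_absNorm_prime {p : ℕ} (hp : p.Prime) {P : Ideal (𝓞 K)}
    (hP : Prime P) : gcdResDeg K p ∣ padicValNat p (Ideal.absNorm P) := by
  obtain ⟨q, hq, hmem⟩ := exists_mem_primesAbove hP
  rw [absNorm_of_mem_primesAbove hq hmem]
  rcases eq_or_ne p q with rfl | hne
  · haveI : Fact p.Prime := ⟨hp⟩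
    rw [padicValNat.prime_pow]
    exact Multiset.gcd_dvd (Multiset.mem_map_of_mem _ hmem)
  · rw [padicValNat.eq_zero_of_not_dvd]
    · exact dvd_zero _
    · intro h
      exact hne (((Nat.prime_dvd_prime_iff_eq hp hq).mp (hp.dvd_of_dvd_pow h)))

set_option synthInstance.maxHeartbeats 1000000 in
set_option maxHeartbeats 1000000 in
lemma gcd_dvd_padicValNat_absNorm {p : ℕ} (hp : p.Prime) {J : Ideal (𝓞 K)} (hJ : J ≠ ⊥) :
    gcdResDeg K p ∣ padicValNat p (Ideal.absNorm J) ∧ Ideal.absNorm J ≠ 0 := by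
  haveI : Fact p.Prime := ⟨hp⟩
  have key : ∀ s : Multiset (Ideal (𝓞 K)), (∀ P ∈ s, Prime P) →
      gcdResDeg K p ∣ padicValNat p (Ideal.absNorm s.prod) ∧ Ideal.absNorm s.prod ≠ 0 := by
    intro s hs
    induction s using Multiset.induction with
    | empty => simp [Ideal.one_eq_top]
    | cons P s ih =>
      have hP := hs P (Multiset.mem_cons_self P s)
      have ih' := ih fun Q hQ => hs Q (Multiset.mem_cons_of_mem hQ)
      have hPN : Ideal.absNorm P ≠ 0 := by
        obtain ⟨q, hq, hmem⟩ := exists_mem_primesAbove hP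
        rw [absNorm_of_mem_primesAbove hq hmem]
        exact pow_ne_zero _ hq.ne_zero
      rw [Multiset.prod_cons, map_mul, padicValNat.mul hPN ih'.2]
      exact ⟨dvd_add (gcd_dvd_padicValNat_absNorm_prime hp hP) ih'.1, mul_ne_zero hPN ih'.2⟩
  have := key (UniqueFactorizationMonoid.normalizedFactors J)
    (fun P hP => UniqueFactorizationMonoid.prime_of_normalized_factor P hP)
  rwa [associated_iff_eq.mp (UniqueFactorizationMonoid.prod_normalizedFactors hJ)] at this

lemma gcd_dvd_padicValRat_absNorm {I : FractionalIdeal (𝓞 K)⁰ K} (hI : I ≠ 0) {p : ℕ}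
    (hp : p.Prime) : (gcdResDeg K p : ℤ) ∣ padicValRat p (FractionalIdeal.absNorm I) := by
  haveI : Fact p.Prime := ⟨hp⟩
  have hnum : I.num ≠ ⊥ := by
    intro h
    exact hI (FractionalIdeal.zero_of_num_eq_bot zero_notMem_nonZeroDivisors h)
  have hden : (I.den : 𝓞 K) ≠ 0 := nonZeroDivisors.coe_ne_zero _
  have hdenspan : Ideal.span {(I.den : 𝓞 K)} ≠ ⊥ := by
    simpa [Ideal.span_singleton_eq_bot] using hden
  obtain ⟨hdvd_a, ha0⟩ := gcd_dvd_padicValNat_absNorm hp hnum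
  obtain ⟨hdvd_b, hb0⟩ := gcd_dvd_padicValNat_absNorm hp hdenspan
  have heq : FractionalIdeal.absNorm I =
      (Ideal.absNorm I.num : ℚ) / (Ideal.absNorm (Ideal.span {(I.den : 𝓞 K)}) : ℚ) := by
    rw [FractionalIdeal.absNorm_eq, Ideal.absNorm_span_singleton, Nat.cast_natAbs, Int.cast_abs]
  rw [heq, padicValRat.div (by exact_mod_cast ha0) (by exact_mod_cast hb0),
    padicValRat.of_nat, padicValRat.of_nat]
  exact dvd_sub (Int.natCast_dvd_natCast.mpr hdvd_a) (Int.natCast_dvd_natCast.mpr hdvd_b)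

open scoped Classical in
lemma gcd_toFinset (p : ℕ) :
    (((primesAbove K p).toFinset.val).map (resDeg K p)).gcd = gcdResDeg K p := by
  apply Nat.dvd_antisymm
  · apply Multiset.dvd_gcd.mpr
    intro b hb
    obtain ⟨P, hP, rfl⟩ := Multiset.mem_map.mp hb
    exact Multiset.gcd_dvd
      (Multiset.mem_map_of_mem _ (Finset.mem_val.mpr (Multiset.mem_toFinset.mpr hP)))
  · apply Multiset.dvd_gcd.mpr
    intro b hb
    obtain ⟨P, hP, rfl⟩ := Multiset.mem_map.mp hb
    exact Multiset.gcd_dvd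
      (Multiset.mem_map_of_mem _ (Multiset.mem_toFinset.mp (Finset.mem_val.mp hP)))

open scoped Classical in
lemma exists_fracIdeal_absNorm_pow {p : ℕ} (hp : p.Prime) {v : ℤ}
    (hdvd : (gcdResDeg K p : ℤ) ∣ v) :
    ∃ J : FractionalIdeal (𝓞 K)⁰ K, J ≠ 0 ∧ FractionalIdeal.absNorm J = (p : ℚ) ^ v := by
  obtain ⟨c, hc⟩ := bezout_finset (primesAbove K p).toFinset (resDeg K p)
  rw [gcd_toFinset] at hc
  obtain ⟨k, hk⟩ := hdvd
  refine ⟨∏ P ∈ (primesAbove K p).toFinset, (P : FractionalIdeal (𝓞 K)⁰ K) ^ (c P * k), ?_, ?_⟩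
  · apply Finset.prod_ne_zero_iff.mpr
    intro P hP
    apply zpow_ne_zero
    rw [ne_eq, FractionalIdeal.coeIdeal_eq_zero]
    exact ((mem_primesAbove_iff hp).mp (Multiset.mem_toFinset.mp hP)).1.ne_zero
  · have hp0 : (p : ℚ) ≠ 0 := Nat.cast_ne_zero.mpr hp.ne_zero
    rw [map_prod]
    have : ∀ P ∈ (primesAbove K p).toFinset,
        FractionalIdeal.absNorm ((P : FractionalIdeal (𝓞 K)⁰ K) ^ (c P * k))
          = (p : ℚ) ^ ((resDeg K p P : ℤ) * (c P * k)) := by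
      intro P hP
      rw [map_zpow₀, FractionalIdeal.coeIdeal_absNorm,
        absNorm_of_mem_primesAbove hp (Multiset.mem_toFinset.mp hP)]
      push_cast
      rw [← zpow_natCast, ← zpow_mul]
    rw [Finset.prod_congr rfl this, prod_zpow_eq hp0]
    congr 1
    have : ∑ P ∈ (primesAbove K p).toFinset, (resDeg K p P : ℤ) * (c P * k)
        = (∑ P ∈ (primesAbove K p).toFinset, c P * (resDeg K p P)) * k := by
      rw [Finset.sum_mul]
      exact Finset.sum_congr rfl fun P _ => by ring
    rw [this, hc, ← hk]

end NumberFieldLemmas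

/-- A nonzero rational `α` is the norm of a nonzero fractional ideal of the
number field `K` if and only if `α > 0` and for every prime `p` the gcd of the residue
degrees of the primes of `K` above `p` divides the `p`-adic valuation of `α`. -/
theorem idealNorm_iff (K : Type*) [Field K] [NumberField K] (α : ℚ) (hα : α ≠ 0) :
    (∃ I : FractionalIdeal (𝓞 K)⁰ K, I ≠ 0 ∧ FractionalIdeal.absNorm I = α) ↔
      (0 < α ∧ ∀ p : ℕ, p.Prime → (gcdResDeg K p : ℤ) ∣ padicValRat p α) := by
  constructor
  · rintro ⟨I, hI0, rfl⟩
    refine ⟨(FractionalIdeal.absNorm_nonneg I).lt_of_ne' ?_, fun p hp =>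
      gcd_dvd_padicValRat_absNorm hI0 hp⟩
    intro h
    exact hI0 (FractionalIdeal.absNorm_eq_zero_iff.mp h)
  · rintro ⟨hpos, hdvd⟩
    classical
    set S := α.num.natAbs.primeFactors ∪ α.den.primeFactors with hSdef
    have hSp : ∀ p ∈ S, p.Prime := by
      intro p hp
      rcases Finset.mem_union.mp hp with h | h <;> exact Nat.prime_of_mem_primeFactors h
    have hex : ∀ p : ℕ, p.Prime → ∃ J : FractionalIdeal (𝓞 K)⁰ K,
        J ≠ 0 ∧ FractionalIdeal.absNorm J = (p : ℚ) ^ padicValRat p α :=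
      fun p hp => exists_fracIdeal_absNorm_pow hp (hdvd p hp)
    choose J hJ0 hJn using hex
    refine ⟨∏ p ∈ S.attach, J p.1 (hSp p.1 p.2), ?_, ?_⟩
    · exact Finset.prod_ne_zero_iff.mpr fun p _ => hJ0 p.1 (hSp p.1 p.2)
    · rw [map_prod, Finset.prod_congr rfl (fun p _ => hJn p.1 (hSp p.1 p.2)),
        Finset.prod_attach S (fun p => (p : ℚ) ^ padicValRat p α)]
      exact (rat_eq_prod_pow_padicValRat hpos).symm
end

section
/- Let K = ℚ(β) be a number field with real embeddings σ_1, …, σ_r ordered so that σ_1(β) < … < σ_r(β), and let m be the number of indices i with σ_i(β) < 0. If m is odd, then N_{K/ℚ}(β) < 0. If m is even and r ≥ 1, then there exists a rational number ε such that N_{K/ℚ}(β + ε) < 0. -/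
open Finset NumberField NumberField.ComplexEmbedding

section aux

variable {K : Type*} [Field K] [NumberField K]

/-- Real embeddings correspond to self-adjoint complex embeddings. -/
noncomputable def realEmbEquiv (K : Type*) [Field K] :
    (K →+* ℝ) ≃ {φ : K →+* ℂ // IsReal φ} where
  toFun τ := ⟨Complex.ofRealHom.comp τ, by
    rw [isReal_iff]; ext x; simp [conjugate_coe_eq]⟩
  invFun φ := φ.2.embedding
  left_inv τ := by
    ext x
    refine Complex.ofReal_injective ?_
    rw [IsReal.coe_embedding_apply]
    rfl
  right_inv φ := by
    ext x
    exact φ.2.coe_embedding_apply x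

theorem key_norm_neg (x : K) (hx : x ≠ 0)
    (h : Odd (Nat.card {σ : K →+* ℝ // σ x < 0})) : Algebra.norm ℚ x < 0 := by
  classical
  -- Step 1: norm as product over all complex embeddings
  have h1 : (algebraMap ℚ ℂ) (Algebra.norm ℚ x) = ∏ φ : K →+* ℂ, φ x := by
    rw [Algebra.norm_eq_prod_embeddings ℚ ℂ x]
    exact (Fintype.prod_equiv (RingHom.equivRatAlgHom K ℂ) (fun φ => φ x) (fun σ => σ x)
      (fun φ => rfl)).symm
  -- Step 2: split into real / non-real embeddings
  have h2 : ∏ φ : K →+* ℂ, φ x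
      = (∏ φ ∈ univ.filter (fun φ : K →+* ℂ => IsReal φ), φ x)
        * ∏ φ ∈ univ.filter (fun φ : K →+* ℂ => ¬ IsReal φ), φ x :=
    (Finset.prod_filter_mul_prod_filter_not univ _ _).symm
  -- Step 3: the non-real product is the positive real number ∏ |φ x|
  set s := univ.filter (fun φ : K →+* ℂ => ¬ IsReal φ) with hs
  have hmem : ∀ φ ∈ s, star φ ∈ s := by
    intro φ hφ
    simp only [hs, mem_filter, mem_univ, true_and] at hφ ⊢
    rwa [isReal_conjugate_iff]
  have hφx : ∀ φ : K →+* ℂ, φ x ≠ 0 := fun φ => (map_ne_zero φ).mpr hx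
  have h3 : ∏ φ ∈ s, (φ x / ‖φ x‖) = 1 := by
    refine Finset.prod_involution (fun φ _ => star φ) ?_ ?_ hmem (fun φ _ => star_star φ)
    · intro φ hφ
      have hne : (‖φ x‖ : ℂ) ≠ 0 := by simpa using hφx φ
      have hst : (star φ) x = starRingEnd ℂ (φ x) := rfl
      rw [hst, div_mul_div_comm, Complex.mul_conj, Complex.normSq_eq_norm_sq, Complex.norm_conj,
        div_eq_one_iff_eq (mul_ne_zero hne hne)]
      push_cast
      ring
    · intro φ hφ _
      simp only [hs, mem_filter, mem_univ, true_and] at hφ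
      intro hcon
      exact hφ (isReal_iff.mpr hcon)
  have h4 : ∏ φ ∈ s, φ x = ((∏ φ ∈ s, ‖φ x‖ : ℝ) : ℂ) := by
    have hcg : ∀ φ ∈ s, φ x = (‖φ x‖ : ℂ) * (φ x / ‖φ x‖) := by
      intro φ _
      rw [mul_div_cancel₀]
      simpa using hφx φ
    rw [Finset.prod_congr rfl hcg, Finset.prod_mul_distrib, h3, mul_one,
      Complex.ofReal_prod]
  have hP : (0:ℝ) < ∏ φ ∈ s, ‖φ x‖ :=
    Finset.prod_pos fun φ _ => by simpa using hφx φ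
  -- Step 4: the real product equals product over real embeddings
  have h5 : ∏ φ ∈ univ.filter (fun φ : K →+* ℂ => IsReal φ), φ x
      = ((∏ τ : K →+* ℝ, τ x : ℝ) : ℂ) := by
    rw [Finset.prod_subtype (univ.filter (fun φ : K →+* ℂ => IsReal φ))
      (p := fun φ => IsReal φ) (by simp) (fun φ => φ x)]
    rw [← Equiv.prod_comp (realEmbEquiv K) (fun φ => (φ : K →+* ℂ) x),
      Complex.ofReal_prod]
    exact Finset.prod_congr rfl fun τ _ => rfl
  -- Step 5: conclude the value of the norm
  have h7 : ((Algebra.norm ℚ x : ℚ) : ℝ)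
      = (∏ τ : K →+* ℝ, τ x) * ∏ φ ∈ s, ‖φ x‖ := by
    refine Complex.ofReal_injective ?_
    rw [Complex.ofReal_ratCast, ← eq_ratCast (algebraMap ℚ ℂ), h1, h2, h4, h5]
    push_cast
    ring
  -- Step 6: the sign of the real product
  have h8 : ∏ τ : K →+* ℝ, τ x < 0 := by
    rw [← sign_eq_neg_one_iff]
    rw [show SignType.sign (∏ τ : K →+* ℝ, τ x) = ∏ τ : K →+* ℝ, SignType.sign (τ x)
      from map_prod signHom _ _]
    rw [show (∏ τ : K →+* ℝ, SignType.sign (τ x))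
        = (∏ τ ∈ univ.filter (fun τ : K →+* ℝ => τ x < 0), SignType.sign (τ x))
          * ∏ τ ∈ univ.filter (fun τ : K →+* ℝ => ¬ τ x < 0), SignType.sign (τ x)
      from (Finset.prod_filter_mul_prod_filter_not univ _ _).symm]
    have hτx : ∀ τ : K →+* ℝ, τ x ≠ 0 := fun τ => (map_ne_zero τ).mpr hx
    have e1 : ∏ τ ∈ univ.filter (fun τ : K →+* ℝ => τ x < 0), SignType.sign (τ x)
        = (-1) ^ (univ.filter (fun τ : K →+* ℝ => τ x < 0)).card := by
      rw [← Finset.prod_const]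
      refine Finset.prod_congr rfl fun τ hτ => ?_
      rw [mem_filter] at hτ
      exact sign_eq_neg_one_iff.mpr hτ.2
    have e2 : ∏ τ ∈ univ.filter (fun τ : K →+* ℝ => ¬ τ x < 0), SignType.sign (τ x) = 1 := by
      refine Finset.prod_eq_one fun τ hτ => ?_
      rw [mem_filter] at hτ
      exact sign_eq_one_iff.mpr (lt_of_le_of_ne (not_lt.mp hτ.2) (Ne.symm (hτx τ)))
    rw [e1, e2, mul_one]
    have hcard : Nat.card {σ : K →+* ℝ // σ x < 0}
        = (univ.filter (fun τ : K →+* ℝ => τ x < 0)).card := by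
      rw [Nat.card_eq_fintype_card, Fintype.card_subtype]
    rw [hcard] at h
    exact Odd.neg_one_pow h
  have : ((Algebra.norm ℚ x : ℚ) : ℝ) < 0 := by
    rw [h7]; exact mul_neg_of_neg_of_pos h8 hP
  exact_mod_cast this

end aux

/-- Let `K = ℚ(β)` be a number field with at least one real embedding, and
let `m` be the number of real embeddings `σ` with `σ β < 0`.  If `m` is odd then
`N_{K/ℚ}(β) < 0`; if `m` is even then there is a rational `ε` with `N_{K/ℚ}(β + ε) < 0`. -/
theorem norm_neg_of_real_embeddings (K : Type*) [Field K] [NumberField K] (β : K)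
    (hgen : IntermediateField.adjoin ℚ {β} = ⊤) (hr : Nonempty (K →+* ℝ)) :
    (Odd (Nat.card {σ : K →+* ℝ // σ β < 0}) → Algebra.norm ℚ β < 0) ∧
    (Even (Nat.card {σ : K →+* ℝ // σ β < 0}) →
      ∃ ε : ℚ, Algebra.norm ℚ (β + algebraMap ℚ K ε) < 0) := by
  classical
  constructor
  · intro h
    have hpos : Nat.card {σ : K →+* ℝ // σ β < 0} ≠ 0 := by
      rcases h with ⟨k, hk⟩; omega
    obtain ⟨⟨σ, hσ⟩⟩ := (Nat.card_ne_zero.mp hpos).1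
    have hβ : β ≠ 0 := by
      rintro rfl
      simp at hσ
    exact key_norm_neg β hβ h
  · intro _
    -- injectivity of τ ↦ τ β
    have htop : Algebra.adjoin ℚ ({β} : Set K) = ⊤ := by
      have hint : IsIntegral ℚ β := IsIntegral.of_finite ℚ β
      have := IntermediateField.adjoin_simple_toSubalgebra_of_isAlgebraic hint.isAlgebraic
      rw [← this, hgen]
      rfl
    have hinj : Function.Injective (fun τ : K →+* ℝ => τ β) := by
      intro τ₁ τ₂ hτ
      have heq : τ₁.toRatAlgHom = τ₂.toRatAlgHom :=
        AlgHom.ext_of_adjoin_eq_top htop (by simpa using hτ)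
      exact RingHom.ext fun y => AlgHom.congr_fun heq y
    obtain ⟨τ₀, -, hτ₀⟩ := Finset.exists_min_image (univ : Finset (K →+* ℝ))
      (fun τ => τ β) univ_nonempty
    -- find ε with τ₀ β + ε < 0 and τ β + ε ≥ 0 for τ ≠ τ₀
    have hε : ∃ ε : ℚ, τ₀ β + ε < 0 ∧ ∀ τ : K →+* ℝ, τ ≠ τ₀ → ¬ (τ β + ε < 0) := by
      by_cases hall : ∀ τ : K →+* ℝ, τ = τ₀
      · obtain ⟨ε, hε⟩ := exists_rat_lt (-(τ₀ β))
        exact ⟨ε, by linarith, fun τ hτ _ => hτ (hall τ)⟩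
      · push_neg at hall
        obtain ⟨τ₁, hτ₁⟩ := hall
        set t := (univ.filter (fun τ : K →+* ℝ => τ ≠ τ₀)).image (fun τ => τ β) with ht
        have htne : t.Nonempty := ⟨τ₁ β, mem_image.mpr ⟨τ₁, by simp [hτ₁], rfl⟩⟩
        set b := t.min' htne with hb
        have hbgt : τ₀ β < b := by
          obtain ⟨τ, hτmem, hτeq⟩ := mem_image.mp (t.min'_mem htne)
          rw [mem_filter] at hτmem
          have hne : τ β ≠ τ₀ β := fun hcon => hτmem.2 (hinj hcon)
          rw [hb, ← hτeq]
          exact lt_of_le_of_ne (hτ₀ τ (mem_univ τ)) (Ne.symm hne)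
        obtain ⟨ε, hε1, hε2⟩ := exists_rat_btwn (neg_lt_neg hbgt)
        refine ⟨ε, by linarith, fun τ hτ => ?_⟩
        have : b ≤ τ β := t.min'_le _ (mem_image.mpr ⟨τ, by simp [hτ], rfl⟩)
        linarith
    obtain ⟨ε, hε1, hε2⟩ := hε
    refine ⟨ε, ?_⟩
    have happ : ∀ τ : K →+* ℝ, τ (β + algebraMap ℚ K ε) = τ β + ε := by
      intro τ
      rw [map_add, show (algebraMap ℚ K) ε = (ε : K) from eq_ratCast _ ε, map_ratCast]
    have hx : β + algebraMap ℚ K ε ≠ 0 := by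
      intro hcon
      rw [show (0:ℝ) = τ₀ 0 from (map_zero τ₀).symm, ← hcon, happ] at hε1
      exact lt_irrefl _ hε1
    refine key_norm_neg _ hx ?_
    have hfilter : univ.filter (fun τ : K →+* ℝ => τ (β + algebraMap ℚ K ε) < 0) = {τ₀} := by
      ext τ
      simp only [mem_filter, mem_univ, true_and, mem_singleton, happ]
      constructor
      · intro hlt
        by_contra hne
        exact hε2 τ hne hlt
      · rintro rfl; exact hε1
    have hcard : Nat.card {σ : K →+* ℝ // σ (β + algebraMap ℚ K ε) < 0} = 1 := by
      rw [Nat.card_eq_fintype_card, Fintype.card_subtype, hfilter, card_singleton]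
    rw [hcard]
    exact odd_one
end

section
/- Let K be a number field. Then the natural inclusion induces an isomorphism (ℚ_{>0} ∩ N_{K/ℚ}J_K)/(ℚ_{>0} ∩ N_{K/ℚ}K^*) ≅ (ℚ^* ∩ N_{K/ℚ}J_K)/N_{K/ℚ}K^*, i.e., the positive part of the knot group equals the whole knot group 𝔎(K/ℚ). -/
open scoped TensorProduct
open NumberField IsDedekindDomain

/-- The subgroup of `kˣ` of elements that are norms of units of `F ⊗[k] K`,
for `F` a completion of `k`. -/
def localNormsAt (k K F : Type*) [Field k] [Field K] [Algebra k K]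
    [Field F] [Algebra k F] : Subgroup kˣ where
  carrier := {c | ∃ β : (F ⊗[k] K)ˣ,
    Units.map (Algebra.norm F) β = Units.map (algebraMap k F).toMonoidHom c}
  one_mem' := ⟨1, by simp⟩
  mul_mem' := by
    rintro a b ⟨α, hα⟩ ⟨β, hβ⟩
    exact ⟨α * β, by simp [hα, hβ]⟩
  inv_mem' := by
    rintro a ⟨α, hα⟩
    exact ⟨α⁻¹, by simp [hα]⟩

/-- The subgroup of `kˣ` of everywhere local norms from `K`: elements of `k^*` that are local
norms at every finite place and every archimedean place of `k`, i.e. `k^* ∩ N_{K/k} J_K`. -/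
noncomputable def everywhereLocalNorms (k K : Type*) [Field k] [NumberField k] [Field K]
    [Algebra k K] : Subgroup kˣ :=
  (⨅ v : HeightOneSpectrum (𝓞 k), localNormsAt k K (v.adicCompletion k)) ⊓
  ((⨅ σ : k →+* ℝ, letI := σ.toAlgebra; localNormsAt k K ℝ) ⊓
   (⨅ σ : k →+* ℂ, letI := σ.toAlgebra; localNormsAt k K ℂ))

/-- The subgroup `N_{K/k} K^*` of `kˣ` of global norms from `K`. -/
noncomputable def globalNorms (k K : Type*) [Field k] [Field K] [Algebra k K] : Subgroup kˣ :=
  (Units.map (Algebra.norm k : K →* k)).range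

/-- The knot group `𝔎(K/k) = (k^* ∩ N_{K/k} J_K) / N_{K/k} K^*`. -/
noncomputable def knotGroup (k K : Type*) [Field k] [NumberField k] [Field K] [Algebra k K] :=
  everywhereLocalNorms k K ⧸ (globalNorms k K).subgroupOf (everywhereLocalNorms k K)

noncomputable instance (k K : Type*) [Field k] [NumberField k] [Field K] [Algebra k K] :
    CommGroup (knotGroup k K) :=
  inferInstanceAs (CommGroup (_ ⧸ _))

open scoped nonZeroDivisors

/-- The subgroup of positive rational units. -/
def posRatUnits : Subgroup ℚˣ where
  carrier := {u | 0 < (u : ℚ)}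
  one_mem' := by norm_num
  mul_mem' := by
    intro a b ha hb
    simp only [Set.mem_setOf_eq, Units.val_mul] at *
    exact mul_pos ha hb
  inv_mem' := by
    intro a ha
    simp only [Set.mem_setOf_eq] at *
    rw [Units.val_inv_eq_inv_val]
    exact inv_pos.mpr ha

/-- The subgroup of `ℚˣ` of norms of nonzero fractional ideals of `K`,
i.e. `N_{K/ℚ} I_K`. -/
noncomputable def idealNorms (K : Type*) [Field K] [NumberField K] : Subgroup ℚˣ where
  carrier := {u | ∃ I : FractionalIdeal (𝓞 K)⁰ K, I ≠ 0 ∧ FractionalIdeal.absNorm I = (u : ℚ)}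
  one_mem' := ⟨1, one_ne_zero, by simp⟩
  mul_mem' := by
    rintro a b ⟨I, hI, hIa⟩ ⟨J, hJ, hJb⟩
    exact ⟨I * J, mul_ne_zero hI hJ, by simp [hIa, hJb]⟩
  inv_mem' := by
    rintro a ⟨I, hI, hIa⟩
    refine ⟨I⁻¹, inv_ne_zero hI, ?_⟩
    rw [map_inv₀, hIa]
    simp

section AuxKnot

open Polynomial

lemma multiset_prod_swap {α β M : Type*} [CommMonoid M] (s : Multiset α) (t : Multiset β)
    (f : α → β → M) :
    (s.map fun a => (t.map (f a)).prod).prod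
      = (t.map fun b => (s.map fun a => f a b).prod).prod := by
  induction s using Multiset.induction with
  | empty => simp
  | cons a s ih => simp [ih, Multiset.prod_map_mul]

lemma neg_pow_card_mul_prod {M : Type*} [CommRing M] (t : Multiset M) (x : M) :
    (t.map fun l => l - x).prod = (-1) ^ Multiset.card t * (t.map fun l => x - l).prod := by
  induction t using Multiset.induction with
  | empty => simp
  | cons a t ih => simp [ih, pow_succ]; ring

lemma matrix_eval_charpoly {n : Type*} [DecidableEq n] [Fintype n] {R : Type*} [CommRing R]
    (P : Matrix n n R) (r : R) :
    P.charpoly.eval r = (Matrix.scalar n r - P).det := by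
  rw [Matrix.charpoly, _root_.eval_det, Matrix.matPolyEquiv_charmatrix]
  simp

lemma smul_one_eq_scalar {n : Type*} [DecidableEq n] [Fintype n] {R : Type*} [CommRing R]
    (r : R) : r • (1 : Matrix n n R) = Matrix.scalar n r := by
  ext i j
  simp [Matrix.scalar, Matrix.smul_apply, Matrix.one_apply, Matrix.diagonal]


lemma det_aeval_eq_prod {n : Type*} [DecidableEq n] [Fintype n]
    (P : Matrix n n ℂ) (p : ℂ[X]) :
    (Polynomial.aeval P p).det = (P.charpoly.roots.map fun z => p.eval z).prod := by
  have hsp : P.charpoly.Splits := IsAlgClosed.splits _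
  have hcard : Multiset.card P.charpoly.roots = Fintype.card n := by
    rw [splits_iff_card_roots.mp hsp, Matrix.charpoly_natDegree_eq_dim]
  have hcp := hsp.eq_prod_roots_of_monic (Matrix.charpoly_monic P)
  by_cases hp : p = 0
  · subst hp
    simp only [map_zero]
    rcases isEmpty_or_nonempty n with h | h
    · have : P.charpoly.roots = 0 := by
        rw [← Multiset.card_eq_zero, hcard, Fintype.card_eq_zero]
      simp [Matrix.det_isEmpty, this]
    · rw [Matrix.det_zero]
      have hne : P.charpoly.roots ≠ 0 := by
        intro h0
        have := hcard
        rw [h0] at this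
        simp only [Multiset.card_zero] at this
        exact (Fintype.card_pos (α := n)).ne this
      obtain ⟨x, hx⟩ := Multiset.exists_mem_of_ne_zero hne
      have : (0 : ℂ) ∈ P.charpoly.roots.map fun z => (0 : ℂ[X]).eval z := by
        simpa using Multiset.mem_map_of_mem (fun z => (0 : ℂ[X]).eval z) hx
      exact (Multiset.prod_eq_zero this).symm
  · have hq : p.Splits := IsAlgClosed.splits _
    have hfac := hq.eq_prod_roots
    have hevalp : ∀ z : ℂ, p.eval z
        = p.leadingCoeff * (p.roots.map fun a => z - a).prod := by
      intro z
      conv_lhs => rw [hfac]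
      rw [eval_mul, eval_C, eval_multiset_prod, Multiset.map_map]
      simp
    have hevalcp : ∀ z : ℂ, P.charpoly.eval z
        = (P.charpoly.roots.map fun l => z - l).prod := by
      intro z
      conv_lhs => rw [hcp]
      rw [eval_multiset_prod, Multiset.map_map]
      simp
    -- compute the determinant of each linear factor
    have hlin : ∀ a : ℂ, ((Polynomial.aeval P) (X - C a)).det
        = (P.charpoly.roots.map fun l => l - a).prod := by
      intro a
      have h1 : (Polynomial.aeval P) (X - C a) = -(Matrix.scalar n a - P) := by
        rw [map_sub, aeval_X, aeval_C, Algebra.algebraMap_eq_smul_one, smul_one_eq_scalar]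
        abel
      rw [h1, Matrix.det_neg, ← matrix_eval_charpoly, hevalcp a,
        neg_pow_card_mul_prod, hcard]
    -- pull the determinant through the product
    let φ : ℂ[X] →* ℂ :=
      Matrix.detMonoidHom.comp ((Polynomial.aeval P : ℂ[X] →ₐ[ℂ] Matrix n n ℂ) : ℂ[X] →* Matrix n n ℂ)
    have hφ : ∀ q : ℂ[X], φ q = ((Polynomial.aeval P) q).det := fun _ => rfl
    calc ((Polynomial.aeval P) p).det = φ p := rfl
      _ = φ (C p.leadingCoeff) * φ ((p.roots.map fun a => X - C a).prod) := by
          rw [← map_mul, ← hfac]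
      _ = p.leadingCoeff ^ Fintype.card n
          * (p.roots.map fun a => (P.charpoly.roots.map fun l => l - a).prod).prod := by
          rw [show φ ((p.roots.map fun a => X - C a).prod)
              = (p.roots.map fun a => ((Polynomial.aeval P) (X - C a)).det).prod by
            rw [map_multiset_prod, Multiset.map_map]; rfl]
          rw [Multiset.map_congr rfl fun a _ => hlin a]
          congr 1
          rw [hφ]
          rw [show (Polynomial.aeval P) (C p.leadingCoeff) = p.leadingCoeff • 1 by
            simp [Algebra.algebraMap_eq_smul_one], Matrix.det_smul, Matrix.det_one, mul_one]
      _ = p.leadingCoeff ^ Fintype.card n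
          * (P.charpoly.roots.map fun l => (p.roots.map fun a => l - a).prod).prod := by
          rw [multiset_prod_swap]
      _ = (P.charpoly.roots.map fun z => p.eval z).prod := by
          rw [← hcard]
          rw [show p.leadingCoeff ^ Multiset.card P.charpoly.roots
            = (P.charpoly.roots.map fun _ => p.leadingCoeff).prod by
              rw [Multiset.map_const', Multiset.prod_replicate]]
          rw [← Multiset.prod_map_mul]
          exact (Multiset.map_congr rfl fun z _ => (hevalp z).symm) ▸ rfl

open ComplexConjugate in
lemma prod_conj_pairs_nonneg (g : ℂ → ℂ) (hg : ∀ z, g (conj z) = conj (g z)) :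
    ∀ s : Multiset ℂ, s.map (fun z => conj z) = s → (∀ z ∈ s, conj z ≠ z) →
      ∃ r : ℝ, 0 ≤ r ∧ (s.map g).prod = (r : ℂ) := by
  intro s
  induction s using Multiset.strongInductionOn with
  | ih s IH =>
    intro hconj hnr
    rcases eq_or_ne s 0 with rfl | hs
    · exact ⟨1, zero_le_one, by simp⟩
    · obtain ⟨a, ha⟩ := Multiset.exists_mem_of_ne_zero hs
      have hca : conj a ∈ s := by
        rw [← hconj]
        exact Multiset.mem_map_of_mem _ ha
      have hne : conj a ≠ a := hnr a ha
      have hca' : conj a ∈ s.erase a := (Multiset.mem_erase_of_ne hne).mpr hca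
      set t : Multiset ℂ := (s.erase a).erase (conj a) with ht
      have hst : s = a ::ₘ conj a ::ₘ t := by
        rw [ht, Multiset.cons_erase hca', Multiset.cons_erase ha]
      have hconjinj : Function.Injective (fun z : ℂ => conj z) :=
        fun x y h => by simpa using congrArg conj h
      have htconj : t.map (fun z => conj z) = t := by
        rw [ht, Multiset.map_erase _ hconjinj, Multiset.map_erase _ hconjinj, hconj]
        simp only [Complex.conj_conj]
        rw [Multiset.erase_comm]
      have htsub : t ≤ s := by
        rw [hst]
        exact le_trans (Multiset.le_cons_self _ _) (Multiset.le_cons_self _ _)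
      have htlt : t < s := by
        rw [hst]
        calc t < conj a ::ₘ t := Multiset.lt_cons_self _ _
          _ < a ::ₘ conj a ::ₘ t := Multiset.lt_cons_self _ _
      obtain ⟨r, hr, hrt⟩ := IH t htlt htconj (fun z hz => hnr z (Multiset.mem_of_le htsub hz))
      refine ⟨Complex.normSq (g a) * r, mul_nonneg (Complex.normSq_nonneg _) hr, ?_⟩
      rw [hst]
      simp only [Multiset.map_cons, Multiset.prod_cons, hrt, hg a]
      rw [← mul_assoc, Complex.mul_conj]
      push_cast
      ring

open ComplexConjugate in
lemma det_aeval_nonneg {n : Type*} [DecidableEq n] [Fintype n] (N : Matrix n n ℝ)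
    (hroot : ∀ r : ℝ, N.charpoly.eval r ≠ 0) (q : ℝ[X]) :
    0 ≤ ((Polynomial.aeval N) q).det := by
  set φ : ℝ →+* ℂ := algebraMap ℝ ℂ with hφ
  set Nc : Matrix n n ℂ := N.map φ with hNc
  -- identify the complexified determinant
  have hdet : φ (((Polynomial.aeval N) q).det) = ((Polynomial.aeval Nc) (q.map φ)).det := by
    rw [RingHom.map_det]
    congr 1
    rw [Polynomial.aeval_def, Polynomial.hom_eval₂, Polynomial.aeval_def, Polynomial.eval₂_map]
    congr 1
    ext r : 1
    ext i j
    simp [Matrix.algebraMap_matrix_apply, Matrix.map_apply, apply_ite φ]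
  have hcpc : Nc.charpoly = N.charpoly.map φ := Matrix.charpoly_map N φ
  have him : ∀ z ∈ Nc.charpoly.roots, conj z ≠ z := by
    intro z hz hcz
    have hzr : z = (z.re : ℂ) := (Complex.conj_eq_iff_re.mp hcz).symm
    have : N.charpoly.eval z.re = 0 := by
      have h0 := Polynomial.isRoot_of_mem_roots hz
      rw [hcpc] at h0
      unfold Polynomial.IsRoot at h0
      rw [hzr, show ((z.re : ℂ)) = φ z.re from rfl,
        Polynomial.eval_map, Polynomial.eval₂_hom] at h0
      exact (_root_.map_eq_zero φ).mp h0
    exact hroot z.re this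
  have hconjinv : Nc.charpoly.roots.map (fun z => conj z) = Nc.charpoly.roots := by
    have hsp : Nc.charpoly.Splits := IsAlgClosed.splits _
    have hmapconj : Nc.charpoly.map (starRingEnd ℂ) = Nc.charpoly := by
      rw [hcpc, Polynomial.map_map]
      congr 1
      ext r : 1
      simp [hφ, Complex.conj_ofReal]
    conv_rhs => rw [← hmapconj]
    rw [hsp.roots_map (starRingEnd ℂ)]
  have hgconj : ∀ z : ℂ, (q.map φ).eval (conj z) = conj ((q.map φ).eval z) := by
    intro z
    rw [Polynomial.eval_map, Polynomial.eval_map, Polynomial.hom_eval₂]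
    congr 1
    ext r : 1
    simp [hφ, Complex.conj_ofReal]
  obtain ⟨r, hr, hprod⟩ := prod_conj_pairs_nonneg (fun z => (q.map φ).eval z) hgconj
    Nc.charpoly.roots hconjinv him
  have hfin : φ (((Polynomial.aeval N) q).det) = φ r := by
    rw [hdet, det_aeval_eq_prod, hprod]
    rfl
  rw [φ.injective hfin]
  exact hr

section NF

variable (K : Type*) [Field K] [NumberField K]

/-- Global norms are local norms at every completion. -/
lemma global_mem_localNormsAt (F : Type*) [Field F] [Algebra ℚ F] (α : Kˣ) :
    Units.map (Algebra.norm ℚ : K →* ℚ) α ∈ localNormsAt ℚ K F := by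
  refine ⟨Units.map (Algebra.TensorProduct.includeRight : K →ₐ[ℚ] F ⊗[ℚ] K).toMonoidHom α, ?_⟩
  ext
  show Algebra.norm F ((1 : F) ⊗ₜ[ℚ] (α : K)) = algebraMap ℚ F (Algebra.norm ℚ (α : K))
  have hmul : Algebra.lmul F (F ⊗[ℚ] K) ((1 : F) ⊗ₜ[ℚ] (α : K))
      = (Algebra.lmul ℚ K (α : K)).baseChange F := by
    apply LinearMap.ext
    intro x
    induction x with
    | zero => simp
    | tmul c y => simp [Algebra.TensorProduct.tmul_mul_tmul]
    | add x y hx hy =>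
      rw [map_add, map_add, ← hx, ← hy]
  rw [Algebra.norm_apply, hmul, LinearMap.det_baseChange, ← Algebra.norm_apply]

lemma global_le_everywhere : globalNorms ℚ K ≤ everywhereLocalNorms ℚ K := by
  rintro x ⟨α, rfl⟩
  refine Subgroup.mem_inf.mpr ⟨?_, Subgroup.mem_inf.mpr ⟨?_, ?_⟩⟩
  · exact Subgroup.mem_iInf.mpr fun v => global_mem_localNormsAt K _ α
  · exact Subgroup.mem_iInf.mpr fun σ =>
      letI := σ.toAlgebra
      global_mem_localNormsAt K ℝ α
  · exact Subgroup.mem_iInf.mpr fun σ =>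
      letI := σ.toAlgebra
      global_mem_localNormsAt K ℂ α

/-- If `K` has a real embedding, then some element has negative norm. -/
lemma exists_neg_norm (σ : K →+* ℝ) : ∃ α : Kˣ, Algebra.norm ℚ (α : K) < 0 := by
  classical
  set pb : PowerBasis ℚ K := Field.powerBasisOfFiniteOfSeparable ℚ K with hpb
  set f : ℚ[X] := minpoly ℚ pb.gen with hf
  have hint : IsIntegral ℚ pb.gen := IsIntegral.of_finite ℚ pb.gen
  set fR : ℝ[X] := f.map (algebraMap ℚ ℝ) with hfR
  set r : ℝ := σ pb.gen with hr
  -- `r` is a root of `fR`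
  have hroot : fR.eval r = 0 := by
    have h0 : Polynomial.aeval pb.gen f = 0 := minpoly.aeval ℚ pb.gen
    have h1 : σ (Polynomial.aeval pb.gen f) = 0 := by rw [h0, map_zero]
    rw [Polynomial.aeval_def, Polynomial.hom_eval₂] at h1
    rw [hfR, Polynomial.eval_map]
    rw [show (algebraMap ℚ ℝ) = σ.comp (algebraMap ℚ K) from Subsingleton.elim _ _]
    exact h1
  -- `fR` is squarefree
  have hsep : f.Separable := (Algebra.IsSeparable.isSeparable ℚ pb.gen)
  have hsqf : Squarefree fR := Polynomial.Separable.squarefree (hsep.map (f := algebraMap ℚ ℝ))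
  -- factor out the root
  obtain ⟨g, hg⟩ := Polynomial.dvd_iff_isRoot.mpr hroot
  have hgr : g.eval r ≠ 0 := by
    intro h0
    obtain ⟨g', hg'⟩ := Polynomial.dvd_iff_isRoot.mpr h0
    have : (X - C r) * (X - C r) ∣ fR := ⟨g', by rw [hg, hg', mul_assoc]⟩
    exact Polynomial.not_isUnit_X_sub_C r (hsqf _ this)
  -- find a rational point where `fR` is negative
  have hcont : Continuous fun x : ℝ => g.eval x := g.continuous_aeval
  obtain ⟨c, hc⟩ : ∃ c : ℚ, fR.eval (c : ℝ) < 0 := by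
    rcases lt_or_gt_of_ne hgr with hneg | hpos
    · have hopen : IsOpen {x : ℝ | g.eval x < 0} := isOpen_lt hcont continuous_const
      obtain ⟨ε, hε, hball⟩ := Metric.isOpen_iff.mp hopen r hneg
      obtain ⟨c, hc1, hc2⟩ := exists_rat_btwn (show r < r + ε by linarith)
      refine ⟨c, ?_⟩
      have hcball : (c : ℝ) ∈ {x : ℝ | g.eval x < 0} := by
        apply hball
        rw [Metric.mem_ball, Real.dist_eq, abs_lt]
        constructor <;> linarith
      have : fR.eval (c : ℝ) = ((c : ℝ) - r) * g.eval (c : ℝ) := by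
        rw [hg]; simp
      rw [this]
      exact mul_neg_of_pos_of_neg (by linarith) hcball
    · have hopen : IsOpen {x : ℝ | 0 < g.eval x} := isOpen_lt continuous_const hcont
      obtain ⟨ε, hε, hball⟩ := Metric.isOpen_iff.mp hopen r hpos
      obtain ⟨c, hc1, hc2⟩ := exists_rat_btwn (show r - ε < r by linarith)
      refine ⟨c, ?_⟩
      have hcball : (c : ℝ) ∈ {x : ℝ | 0 < g.eval x} := by
        apply hball
        rw [Metric.mem_ball, Real.dist_eq, abs_lt]
        constructor <;> linarith
      have : fR.eval (c : ℝ) = ((c : ℝ) - r) * g.eval (c : ℝ) := by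
        rw [hg]; simp
      rw [this]
      exact mul_neg_of_neg_of_pos (by linarith) hcball
  -- transfer back to ℚ
  have hfc : f.eval c < 0 := by
    have : fR.eval (c : ℝ) = ((f.eval c : ℚ) : ℝ) := by
      rw [hfR, show ((c : ℚ) : ℝ) = algebraMap ℚ ℝ c from rfl, Polynomial.eval_map,
        Polynomial.eval₂_hom]
      rfl
    rw [this] at hc
    exact_mod_cast hc
  -- the norm of `c - θ` equals `f.eval c`
  have hnorm : Algebra.norm ℚ (algebraMap ℚ K c - pb.gen) = f.eval c := by
    rw [Algebra.norm_eq_matrix_det pb.basis, map_sub, AlgHom.commutes]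
    rw [show (algebraMap ℚ (Matrix (Fin pb.dim) (Fin pb.dim) ℚ)) c
      = Matrix.scalar (Fin pb.dim) c from rfl]
    rw [← matrix_eval_charpoly, charpoly_leftMulMatrix]
  have hx : algebraMap ℚ K c - pb.gen ≠ 0 := by
    intro h0
    rw [h0] at hnorm
    rw [Algebra.norm_zero] at hnorm
    exact absurd hnorm.symm (ne_of_lt (hnorm ▸ hfc)).symm
  refine ⟨Units.mk0 _ hx, ?_⟩
  rw [Units.val_mk0, hnorm]
  exact hfc

/-- If `K` has no real embedding, then local norms at the real place are positive. -/
lemma local_real_pos (hK : IsEmpty (K →+* ℝ)) (h : ℚˣ)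
    (hh : h ∈ localNormsAt ℚ K ℝ) : 0 < (h : ℚ) := by
  classical
  obtain ⟨β, hβ⟩ := hh
  set pb : PowerBasis ℚ K := Field.powerBasisOfFiniteOfSeparable ℚ K with hpb
  set f : ℚ[X] := minpoly ℚ pb.gen with hf
  set T : ℝ ⊗[ℚ] K := (1 : ℝ) ⊗ₜ[ℚ] pb.gen with hT
  -- the multiplication by T is the base change of multiplication by the generator
  have hmul : Algebra.lmul ℝ (ℝ ⊗[ℚ] K) T = (Algebra.lmul ℚ K pb.gen).baseChange ℝ := by
    apply LinearMap.ext
    intro x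
    induction x with
    | zero => simp
    | tmul c y => simp [hT, Algebra.TensorProduct.tmul_mul_tmul]
    | add x y hx hy => rw [map_add, map_add, ← hx, ← hy]
  -- charpoly of multiplication by T
  have hcharT : (Algebra.lmul ℝ (ℝ ⊗[ℚ] K) T).charpoly = f.map (algebraMap ℚ ℝ) := by
    rw [hmul, LinearMap.charpoly_baseChange]
    congr 1
    rw [← (Algebra.lmul ℚ K pb.gen).charpoly_toMatrix pb.basis]
    rw [show LinearMap.toMatrix pb.basis pb.basis ((Algebra.lmul ℚ K) pb.gen)
      = Algebra.leftMulMatrix pb.basis pb.gen from rfl]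
    exact charpoly_leftMulMatrix pb
  -- no real roots
  have hnoroot : ∀ r : ℝ, (f.map (algebraMap ℚ ℝ)).eval r ≠ 0 := by
    intro r h0
    have haev : Polynomial.aeval r f = 0 := by
      rwa [Polynomial.aeval_def, ← Polynomial.eval_map]
    exact hK.elim ((pb.lift r haev).toRingHom)
  -- write β as a polynomial in T
  set bA := pb.basis.baseChange ℝ with hbA
  set q : ℝ[X] := ∑ i : Fin pb.dim, Polynomial.C (bA.repr (β : ℝ ⊗[ℚ] K) i) * X ^ (i : ℕ) with hq
  have hβq : Polynomial.aeval T q = (β : ℝ ⊗[ℚ] K) := by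
    rw [hq]
    rw [map_sum]
    have : ∀ i : Fin pb.dim, Polynomial.aeval T (Polynomial.C (bA.repr (β : ℝ ⊗[ℚ] K) i) * X ^ (i : ℕ))
        = bA.repr (β : ℝ ⊗[ℚ] K) i • bA i := by
      intro i
      rw [map_mul, Polynomial.aeval_C, map_pow, Polynomial.aeval_X]
      rw [show T ^ (i : ℕ) = bA i from by
        rw [hbA, Module.Basis.baseChange_apply, hT, Algebra.TensorProduct.tmul_pow, one_pow,
          pb.coe_basis]]
      rw [Algebra.smul_def]
    rw [Finset.sum_congr rfl fun i _ => this i]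
    exact bA.sum_repr (β : ℝ ⊗[ℚ] K)
  -- the norm of β is nonnegative
  have hdetnn : 0 ≤ Algebra.norm ℝ (β : ℝ ⊗[ℚ] K) := by
    rw [Algebra.norm_apply, ← hβq]
    rw [show (Algebra.lmul ℝ (ℝ ⊗[ℚ] K)) (Polynomial.aeval T q) = Polynomial.aeval (Algebra.lmul ℝ (ℝ ⊗[ℚ] K) T) q
      from (Polynomial.aeval_algHom_apply (Algebra.lmul ℝ (ℝ ⊗[ℚ] K)) T q).symm]
    rw [← LinearMap.det_toMatrix bA]
    rw [show LinearMap.toMatrix bA bA (Polynomial.aeval ((Algebra.lmul ℝ (ℝ ⊗[ℚ] K)) T) q)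
        = Polynomial.aeval (LinearMap.toMatrix bA bA ((Algebra.lmul ℝ (ℝ ⊗[ℚ] K)) T)) q from
      (Polynomial.aeval_algHom_apply (LinearMap.toMatrixAlgEquiv bA).toAlgHom _ q).symm]
    apply det_aeval_nonneg
    intro r
    rw [show (LinearMap.toMatrix bA bA ((Algebra.lmul ℝ (ℝ ⊗[ℚ] K)) T)).charpoly
      = ((Algebra.lmul ℝ (ℝ ⊗[ℚ] K)) T).charpoly from ((Algebra.lmul ℝ (ℝ ⊗[ℚ] K)) T).charpoly_toMatrix bA]
    rw [hcharT]
    exact hnoroot r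
  -- conclude
  have hval : Algebra.norm ℝ (β : ℝ ⊗[ℚ] K) = algebraMap ℚ ℝ (h : ℚ) := congrArg Units.val hβ
  have hne : Algebra.norm ℝ (β : ℝ ⊗[ℚ] K) ≠ 0 := by
    rw [show Algebra.norm ℝ (β : ℝ ⊗[ℚ] K) = ((Units.map (Algebra.norm ℝ) β : ℝˣ) : ℝ) from rfl]
    exact Units.ne_zero _
  have hpos : 0 < algebraMap ℚ ℝ (h : ℚ) := by
    rw [← hval]
    exact lt_of_le_of_ne hdetnn (Ne.symm hne)
  rw [show algebraMap ℚ ℝ (h : ℚ) = ((h : ℚ) : ℝ) from by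
    rw [eq_ratCast (algebraMap ℚ ℝ) (h : ℚ)]] at hpos
  exact_mod_cast hpos

/-- If `K` has no real embedding, every everywhere-local norm is positive. -/
lemma everywhere_pos (hK : IsEmpty (K →+* ℝ)) (h : ℚˣ)
    (hh : h ∈ everywhereLocalNorms ℚ K) : 0 < (h : ℚ) := by
  obtain ⟨-, h2⟩ := Subgroup.mem_inf.mp hh
  obtain ⟨h21, -⟩ := Subgroup.mem_inf.mp h2
  have hmem := Subgroup.mem_iInf.mp h21 (Rat.castHom ℝ)
  rw [show (Rat.castHom ℝ).toAlgebra = (inferInstance : Algebra ℚ ℝ) from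
    Subsingleton.elim _ _] at hmem
  exact local_real_pos K hK h hmem

end NF


end AuxKnot

/-- The natural inclusion induces an isomorphism
`(ℚ_{>0} ∩ N_{K/ℚ}J_K)/(ℚ_{>0} ∩ N_{K/ℚ}K^*) ≅ (ℚ^* ∩ N_{K/ℚ}J_K)/N_{K/ℚ}K^*`,
i.e. the positive part of the knot group is the whole knot group. -/
theorem pos_knotGroup_iso_knotGroup (K : Type*) [Field K] [NumberField K] :
    Nonempty
      ((↥(posRatUnits ⊓ everywhereLocalNorms ℚ K) ⧸
          (posRatUnits ⊓ globalNorms ℚ K).subgroupOf (posRatUnits ⊓ everywhereLocalNorms ℚ K))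
        ≃* knotGroup ℚ K) := by
  classical
  set H := everywhereLocalNorms ℚ K with hH
  set N := globalNorms ℚ K with hN
  set P := posRatUnits with hP
  let φ : ↥(P ⊓ H) →* ↥H ⧸ N.subgroupOf H :=
    (QuotientGroup.mk' (N.subgroupOf H)).comp (Subgroup.inclusion inf_le_right)
  have hφval : ∀ x : ↥(P ⊓ H), φ x = QuotientGroup.mk (⟨(x : ℚˣ), x.2.2⟩ : ↥H) := fun x => rfl
  have hsurj : Function.Surjective φ := by
    intro y
    obtain ⟨x, rfl⟩ := QuotientGroup.mk'_surjective (N.subgroupOf H) y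
    rcases lt_trichotomy ((x : ℚˣ) : ℚ) 0 with hneg | hzero | hpos
    · -- x is negative; need a negative global norm
      rcases isEmpty_or_nonempty (K →+* ℝ) with hK | hne
      · exact absurd (everywhere_pos K hK x x.2) (by simpa using (not_lt.mpr hneg.le))
      · obtain ⟨σ⟩ := hne
        obtain ⟨α, hα⟩ := exists_neg_norm K σ
        set u : ℚˣ := Units.map (Algebra.norm ℚ : K →* ℚ) α with hu
        have huval : (u : ℚ) = Algebra.norm ℚ (α : K) := rfl
        have huN : u ∈ N := ⟨α, rfl⟩
        have huH : u ∈ H := global_le_everywhere K huN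
        have hpP : (x : ℚˣ) * u⁻¹ ∈ P := by
          show (0 : ℚ) < (((x : ℚˣ) * u⁻¹ : ℚˣ) : ℚ)
          rw [Units.val_mul, Units.val_inv_eq_inv_val]
          have hune : (u : ℚ) < 0 := by rw [huval]; exact hα
          exact mul_pos_of_neg_of_neg hneg (inv_neg''.mpr hune)
        have hpH : (x : ℚˣ) * u⁻¹ ∈ H := mul_mem x.2 (inv_mem huH)
        refine ⟨⟨(x : ℚˣ) * u⁻¹, Subgroup.mem_inf.mpr ⟨hpP, hpH⟩⟩, ?_⟩
        rw [hφval]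
        rw [QuotientGroup.mk'_apply, QuotientGroup.eq]
        refine Subgroup.mem_subgroupOf.mpr ?_
        show ((⟨(x : ℚˣ) * u⁻¹, hpH⟩ : ↥H)⁻¹ * x : ℚˣ) ∈ N
        have : ((⟨(x : ℚˣ) * u⁻¹, hpH⟩ : ↥H)⁻¹ * x : ℚˣ)
            = ((x : ℚˣ) * u⁻¹)⁻¹ * (x : ℚˣ) := rfl
        rw [this, mul_inv_rev, inv_inv, mul_assoc, inv_mul_cancel, mul_one]
        exact huN
    · exact absurd hzero (Units.ne_zero _)
    · refine ⟨⟨(x : ℚˣ), Subgroup.mem_inf.mpr ⟨hpos, x.2⟩⟩, ?_⟩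
      rw [hφval]
      rfl
  have hker : ((P ⊓ N).subgroupOf (P ⊓ H)) = φ.ker := by
    ext x
    rw [MonoidHom.mem_ker, hφval, QuotientGroup.eq_one_iff, Subgroup.mem_subgroupOf,
      Subgroup.mem_subgroupOf]
    constructor
    · rintro ⟨-, hn⟩
      exact hn
    · intro hn
      exact ⟨x.2.1, hn⟩
  exact ⟨(QuotientGroup.quotientMulEquivOfEq hker).trans
    (QuotientGroup.quotientKerEquivOfSurjective φ hsurj)⟩
end

section
/- Let K be a number field and suppose α ∈ ℚ_{>0} is an everywhere local norm from K, i.e., α ∈ N_{K/ℚ}J_K. Then α is the norm of a nonzero fractional ideal of K: α ∈ N_{K/ℚ}I_K. -/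
open scoped TensorProduct
open NumberField IsDedekindDomain

set_option maxHeartbeats 1000000
set_option synthInstance.maxHeartbeats 200000

open scoped nonZeroDivisors

lemma norm_one_tmul {k K F : Type*} [Field k] [Field K] [Algebra k K] [FiniteDimensional k K]
    [Field F] [Algebra k F] (x : K) :
    Algebra.norm F ((1 : F) ⊗ₜ[k] x) = algebraMap k F (Algebra.norm k x) := by
  let b := Module.Free.chooseBasis k K
  have hM : Algebra.leftMulMatrix (Algebra.TensorProduct.basis F b) ((1 : F) ⊗ₜ[k] x)
      = (algebraMap k F).mapMatrix (Algebra.leftMulMatrix b x) := by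
    ext i j
    rw [RingHom.mapMatrix_apply, Matrix.map_apply, Algebra.leftMulMatrix_eq_repr_mul,
      Algebra.leftMulMatrix_eq_repr_mul, Algebra.TensorProduct.basis_apply,
      Algebra.TensorProduct.tmul_mul_tmul, one_mul, Algebra.TensorProduct.basis_repr_tmul]
    simp
  rw [Algebra.norm_eq_matrix_det b, Algebra.norm_eq_matrix_det (Algebra.TensorProduct.basis F b),
    hM, RingHom.map_det]

/-- In a valued field `F` with a dense subfield `k`, an element of `k` which is a norm from
`F ⊗[k] K` has the same valuation as the norm of some global element of `K`. -/
lemma exists_near_norm {k K F Γ₀ : Type*} [Field k] [Field K] [Algebra k K]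
    [FiniteDimensional k K] [Field F] [Algebra k F]
    [LinearOrderedCommGroupWithZero Γ₀] [Valued F Γ₀]
    (hdense : DenseRange (algebraMap k F)) (u : k) (hu : Valued.v (algebraMap k F u) ≠ 0)
    (β : F ⊗[k] K) (hβ : Algebra.norm F β = algebraMap k F u) :
    ∃ x : K, x ≠ 0 ∧
      Valued.v (algebraMap k F (Algebra.norm k x)) = Valued.v (algebraMap k F u) := by
  classical
  set b := Module.Free.chooseBasis k K with hb
  set B : Module.Basis (Module.Free.ChooseBasisIndex k K) F (F ⊗[k] K) :=
    Algebra.TensorProduct.basis F b with hB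
  set φ : (Module.Free.ChooseBasisIndex k K → F) → F :=
    fun c => Matrix.det (∑ i, c i • Algebra.leftMulMatrix B (B i)) with hφdef
  have hφ : ∀ y : F ⊗[k] K, φ (fun i => B.repr y i) = Algebra.norm F y := by
    intro y
    have h1 : (∑ i, B.repr y i • Algebra.leftMulMatrix B (B i))
        = Algebra.leftMulMatrix B y := by
      rw [show (∑ i, B.repr y i • Algebra.leftMulMatrix B (B i))
          = Algebra.leftMulMatrix B (∑ i, B.repr y i • B i) by
            rw [map_sum]; exact Finset.sum_congr rfl fun i _ => (map_smul _ _ _).symm,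
        B.sum_repr y]
    have h2 : φ (fun i => B.repr y i)
        = Matrix.det (∑ i, B.repr y i • Algebra.leftMulMatrix B (B i)) := rfl
    rw [h2, h1, Algebra.norm_eq_matrix_det B]
  have hcont : Continuous φ := by
    refine Continuous.matrix_det (continuous_matrix fun i j => ?_)
    have : (fun c : Module.Free.ChooseBasisIndex k K → F =>
        (∑ s, c s • Algebra.leftMulMatrix B (B s)) i j)
        = fun c => ∑ s, c s * Algebra.leftMulMatrix B (B s) i j := by
      funext c
      simp [Matrix.sum_apply]
    rw [this]
    exact continuous_finset_sum _ fun s _ => (continuous_apply s).mul continuous_const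
  set γ : Γ₀ˣ := Units.mk0 _ hu with hγ
  set S : Set F := {y : F | Valued.v (y - algebraMap k F u) < (γ : Γ₀)} with hS
  have hSnhds : S ∈ nhds (algebraMap k F u) := Valued.mem_nhds.2
    ⟨Units.mk0 (Valued.v.restrict (algebraMap k F u))
      ((Valuation.ne_zero_iff _).mpr ((Valuation.ne_zero_iff _).mp hu)),
      fun y hy => (Valuation.restrict_lt_iff _).mp hy⟩
  have hc0 : φ (fun i => B.repr β i) = algebraMap k F u := by rw [hφ, hβ]
  have hU : φ ⁻¹' S ∈ nhds (fun i => B.repr β i) :=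
    hcont.continuousAt.preimage_mem_nhds (hc0 ▸ hSnhds)
  have hdense' : Dense (Set.pi Set.univ
      fun _ : Module.Free.ChooseBasisIndex k K => Set.range (algebraMap k F)) :=
    dense_pi Set.univ fun i _ => hdense
  obtain ⟨c, hcU, hcD⟩ := (mem_closure_iff_nhds.1
    (hdense' (fun i => B.repr β i)) _ hU)
  choose q hq using fun i => hcD i (Set.mem_univ i)
  set x : K := ∑ i, q i • b i with hx
  have h1x : ((1 : F) ⊗ₜ[k] x) = ∑ i, c i • B i := by
    rw [hx, TensorProduct.tmul_sum]
    refine Finset.sum_congr rfl fun i _ => ?_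
    rw [TensorProduct.tmul_smul, hB, Algebra.TensorProduct.basis_apply, ← hq i,
      algebraMap_smul]
  have hφc : φ c = algebraMap k F (Algebra.norm k x) := by
    have h2 : φ c = Algebra.norm F ((1 : F) ⊗ₜ[k] x) := by
      rw [← hφ ((1 : F) ⊗ₜ[k] x)]
      congr 1
      funext i
      rw [h1x, B.repr_sum_self]
    rw [h2, norm_one_tmul]
  have hlt : Valued.v (algebraMap k F (Algebra.norm k x) - algebraMap k F u) < (γ : Γ₀) := by
    have h3 := hcU
    rw [Set.mem_preimage, hS, Set.mem_setOf_eq, hφc] at h3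
    exact h3
  have hveq : Valued.v (algebraMap k F (Algebra.norm k x)) = Valued.v (algebraMap k F u) :=
    Valuation.map_eq_of_sub_lt _ hlt
  refine ⟨x, ?_, hveq⟩
  intro hx0
  rw [hx0, Algebra.norm_zero, map_zero, map_zero] at hveq
  exact hu hveq.symm


/-- The height one prime of `𝓞 ℚ` corresponding to a rational prime `p`. -/
noncomputable def ratPrimeSpec (p : ℕ) (hp : p.Prime) : HeightOneSpectrum (𝓞 ℚ) where
  asIdeal := Ideal.span {(p : 𝓞 ℚ)}
  isPrime := by
    rw [Ideal.span_singleton_prime (by exact_mod_cast hp.ne_zero),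
      ← MulEquiv.prime_iff Rat.ringOfIntegersEquiv]
    simpa using Nat.prime_iff_prime_int.1 hp
  ne_bot := by
    rw [Ne, Ideal.span_singleton_eq_bot]
    exact_mod_cast hp.ne_zero

lemma ratPrimeSpec_mem_pow_iff (p : ℕ) (hp : p.Prime) (r : 𝓞 ℚ) (n : ℕ) :
    r ∈ (ratPrimeSpec p hp).asIdeal ^ n ↔ (p : ℤ) ^ n ∣ Rat.ringOfIntegersEquiv r := by
  rw [show (ratPrimeSpec p hp).asIdeal = Ideal.span {(p : 𝓞 ℚ)} from rfl,
    Ideal.span_singleton_pow, Ideal.mem_span_singleton]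
  constructor
  · intro h
    have h2 := map_dvd (Rat.ringOfIntegersEquiv : 𝓞 ℚ ≃+* ℤ) h
    simpa using h2
  · intro h
    have h2 := map_dvd (Rat.ringOfIntegersEquiv.symm : ℤ ≃+* 𝓞 ℚ) h
    rw [map_pow, map_natCast, RingEquiv.symm_apply_apply] at h2
    exact h2

open IsDedekindDomain.HeightOneSpectrum in
lemma ratPrimeSpec_intValuation (p : ℕ) (hp : p.Prime) (z : ℤ) (hz : z ≠ 0) :
    (ratPrimeSpec p hp).intValuationDef ((z : 𝓞 ℚ)) =
      ((Multiplicative.ofAdd (-(padicValInt p z : ℤ)) : Multiplicative ℤ) :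
        WithZero (Multiplicative ℤ)) := by
  haveI : Fact p.Prime := ⟨hp⟩
  have hz' : ((z : 𝓞 ℚ)) ≠ 0 := by exact_mod_cast hz
  obtain ⟨m, hval⟩ : ∃ m : ℕ, (ratPrimeSpec p hp).intValuationDef ((z : 𝓞 ℚ))
      = ((Multiplicative.ofAdd (-(m : ℤ)) : Multiplicative ℤ) : WithZero (Multiplicative ℤ)) :=
    ⟨_, (ratPrimeSpec p hp).intValuationDef_if_neg hz'⟩
  have hchar : ∀ n : ℕ, ((ratPrimeSpec p hp).intValuationDef ((z : 𝓞 ℚ))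
      ≤ ((Multiplicative.ofAdd (-(n : ℤ)) : Multiplicative ℤ) : WithZero (Multiplicative ℤ)))
      ↔ n ≤ padicValInt p z := by
    intro n
    show (ratPrimeSpec p hp).intValuation _ ≤ WithZero.exp _ ↔ _
    rw [intValuation_le_pow_iff_dvd, Ideal.dvd_span_singleton, ratPrimeSpec_mem_pow_iff,
      show (Rat.ringOfIntegersEquiv ((z : 𝓞 ℚ)) : ℤ) = z by simp, padicValInt_dvd_iff]
    simp [hz]
  have hord : ∀ n : ℕ, ((ratPrimeSpec p hp).intValuationDef ((z : 𝓞 ℚ))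
      ≤ ((Multiplicative.ofAdd (-(n : ℤ)) : Multiplicative ℤ) : WithZero (Multiplicative ℤ)))
      ↔ n ≤ m := by
    intro n
    rw [hval]
    rw [WithZero.coe_le_coe, Multiplicative.ofAdd_le, neg_le_neg_iff, Int.ofNat_le]
  have hmeq : m = padicValInt p z := by
    have h1 := (hchar m).mp ((hord m).mpr le_rfl)
    have h2 := (hord (padicValInt p z)).mp ((hchar (padicValInt p z)).mpr le_rfl)
    omega
  rw [hval, hmeq]

open IsDedekindDomain.HeightOneSpectrum in
lemma ratPrimeSpec_valuation (p : ℕ) (hp : p.Prime) (q : ℚ) (hq : q ≠ 0) :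
    (ratPrimeSpec p hp).valuation ℚ q =
      ((Multiplicative.ofAdd (-(padicValRat p q)) : Multiplicative ℤ) :
        WithZero (Multiplicative ℤ)) := by
  haveI : Fact p.Prime := ⟨hp⟩
  have hnum : (q.num : ℚ) ≠ 0 := by exact_mod_cast Rat.num_ne_zero.mpr hq
  have h1 : (ratPrimeSpec p hp).valuation ℚ ((q.num : ℤ) : ℚ) =
      ((Multiplicative.ofAdd (-(padicValInt p q.num : ℤ)) : Multiplicative ℤ) :
        WithZero (Multiplicative ℤ)) := by
    rw [show ((q.num : ℤ) : ℚ) = algebraMap (𝓞 ℚ) ℚ ((q.num : 𝓞 ℚ)) by simp,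
      valuation_of_algebraMap]
    exact ratPrimeSpec_intValuation p hp q.num (Rat.num_ne_zero.mpr hq)
  have h2 : (ratPrimeSpec p hp).valuation ℚ ((q.den : ℕ) : ℚ) =
      ((Multiplicative.ofAdd (-(padicValNat p q.den : ℤ)) : Multiplicative ℤ) :
        WithZero (Multiplicative ℤ)) := by
    rw [show ((q.den : ℕ) : ℚ) = algebraMap (𝓞 ℚ) ℚ (((q.den : ℤ) : 𝓞 ℚ)) by push_cast; simp,
      valuation_of_algebraMap]
    have hd := ratPrimeSpec_intValuation p hp (q.den : ℤ) (by exact_mod_cast q.den_nz)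
    rw [padicValInt.of_nat] at hd
    exact hd
  have h3 : (ratPrimeSpec p hp).valuation ℚ q
      = (ratPrimeSpec p hp).valuation ℚ ((q.num : ℤ) : ℚ)
        / (ratPrimeSpec p hp).valuation ℚ ((q.den : ℕ) : ℚ) := by
    rw [← map_div₀]
    congr 1
    exact (Rat.num_div_den q).symm
  rw [h3, h1, h2, ← WithZero.coe_div, ← ofAdd_sub]
  congr 1
  rw [padicValRat]
  ring_nf

open IsDedekindDomain.HeightOneSpectrum in
/-- If `u` is a norm from `(v.adicCompletion ℚ) ⊗[ℚ] K`, then there is `x ∈ K^*` whose global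
norm has the same `v`-adic valuation as `u`. -/
lemma exists_valuation_norm_eq (K : Type*) [Field K] [NumberField K]
    (v : HeightOneSpectrum (𝓞 ℚ)) (u : ℚˣ)
    (h : u ∈ localNormsAt ℚ K (v.adicCompletion ℚ)) :
    ∃ x : K, x ≠ 0 ∧ v.valuation ℚ (Algebra.norm ℚ x) = v.valuation ℚ (u : ℚ) := by
  obtain ⟨β, hβ⟩ := h
  have hβval : Algebra.norm (v.adicCompletion ℚ) (β : (v.adicCompletion ℚ) ⊗[ℚ] K)
      = algebraMap ℚ (v.adicCompletion ℚ) (u : ℚ) := congrArg Units.val hβ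
  have hcoe : ∀ r : ℚ, Valued.v (algebraMap ℚ (v.adicCompletion ℚ) r) = v.valuation ℚ r :=
    fun r => valuedAdicCompletion_eq_valuation' v r
  have hdense : DenseRange (algebraMap ℚ (v.adicCompletion ℚ)) :=
    denseRange_algebraMap ℚ v
  have hu : Valued.v (algebraMap ℚ (v.adicCompletion ℚ) (u : ℚ)) ≠ 0 := by
    rw [hcoe]
    simp [Valuation.ne_zero_iff]
  obtain ⟨x, hx0, hxv⟩ := exists_near_norm hdense (u : ℚ) hu _ hβval
  rw [hcoe, hcoe] at hxv
  exact ⟨x, hx0, hxv⟩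


/-- The set of positive rational units that are norms of nonzero fractional ideals and are
powers of a single prime. -/
def primePowNorms (K : Type*) [Field K] [NumberField K] : Set ℚˣ :=
  {w | w ∈ idealNorms K ∧ ∃ q k : ℕ, q.Prime ∧ (w : ℚ) = (q : ℚ) ^ k}

lemma primePart_mem_closure {K : Type*} [Field K] [NumberField K] {w : ℚˣ}
    (hw : w ∈ Subgroup.closure (primePowNorms K)) (p : ℕ) (hp : p.Prime)
    (hp0 : (p : ℚ) ≠ 0) :
    (Units.mk0 (p : ℚ) hp0) ^ (padicValRat p (w : ℚ)) ∈ Subgroup.closure (primePowNorms K) := by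
  haveI : Fact p.Prime := ⟨hp⟩
  induction hw using Subgroup.closure_induction with
  | mem x hx =>
    have hx' := hx
    obtain ⟨hxnorm, q, k, hq, hqk⟩ := hx
    haveI : Fact q.Prime := ⟨hq⟩
    have hq0 : (q : ℚ) ≠ 0 := by exact_mod_cast hq.ne_zero
    by_cases hpq : p = q
    · subst hpq
      have hval : padicValRat p ((x : ℚˣ) : ℚ) = (k : ℤ) := by
        rw [hqk, padicValRat.pow, padicValRat.self hp.one_lt, mul_one]
      rw [hval]
      have heq : (Units.mk0 (p : ℚ) hp0) ^ ((k : ℤ)) = x := by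
        ext
        push_cast
        rw [hqk, Units.val_mk0, zpow_natCast]
      rw [heq]
      exact Subgroup.subset_closure hx'
    · have hval : padicValRat p ((x : ℚˣ) : ℚ) = 0 := by
        rw [hqk, padicValRat.pow,
          show ((q : ℚ)) = ((q : ℕ) : ℚ) by norm_cast, padicValRat.of_nat,
          padicValNat_primes hpq]
        simp
      rw [hval, zpow_zero]
      exact one_mem _
  | one =>
    rw [show (((1 : ℚˣ) : ℚ)) = (1 : ℚ) by norm_cast, padicValRat.one, zpow_zero]
    exact one_mem _
  | mul x y hx hy ihx ihy =>
    rw [Units.val_mul, padicValRat.mul (Units.ne_zero x) (Units.ne_zero y), zpow_add]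
    exact mul_mem ihx ihy
  | inv x hx ihx =>
    rw [show (((x⁻¹ : ℚˣ) : ℚ)) = ((x : ℚ))⁻¹ from Units.val_inv_eq_inv_val x,
      padicValRat.inv, zpow_neg]
    exact inv_mem ihx

lemma absNorm_ideal_mem_closure (K : Type*) [Field K] [NumberField K] :
    ∀ I : Ideal (𝓞 K), I ≠ 0 →
      ∃ w ∈ Subgroup.closure (primePowNorms K), (w : ℚ) = (Ideal.absNorm I : ℚ) := by
  intro I
  induction I using UniqueFactorizationMonoid.induction_on_prime with
  | h₁ => exact fun h => absurd rfl h
  | h₂ I hIu =>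
    intro _
    refine ⟨1, one_mem _, ?_⟩
    rw [Ideal.isUnit_iff.mp hIu, Ideal.absNorm_top]
    norm_num
  | h₃ I P hI0 hP ih =>
    intro _
    obtain ⟨wI, hwI, hwIv⟩ := ih hI0
    have hPprime : P.IsPrime := Ideal.isPrime_of_prime hP
    have hPb : P ≠ ⊥ := hP.ne_zero
    have hPn : Ideal.absNorm P ≠ 0 := by
      rw [Ne, Ideal.absNorm_eq_zero_iff]
      exact hPb
    have hPnQ : ((Ideal.absNorm P : ℕ) : ℚ) ≠ 0 := by exact_mod_cast hPn
    haveI : P.IsMaximal := Ideal.IsPrime.isMaximal hPprime hPb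
    haveI := Ideal.Quotient.field P
    have hfin : Finite ((𝓞 K) ⧸ P) := (Ideal.absNorm_ne_zero_iff P).mp hPn
    haveI : Fintype ((𝓞 K) ⧸ P) := Fintype.ofFinite _
    obtain ⟨q, -, n, hq, hcard⟩ := FiniteField.card' (K := (𝓞 K) ⧸ P)
    have hPcard : Ideal.absNorm P = q ^ (n : ℕ) := by
      rw [Ideal.absNorm_apply, Submodule.cardQuot_apply, Nat.card_eq_fintype_card, hcard]
    have hPmem : (Units.mk0 _ hPnQ) ∈ primePowNorms K := by
      refine ⟨⟨(P : FractionalIdeal (𝓞 K)⁰ K), ?_, ?_⟩, q, (n : ℕ), hq, ?_⟩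
      · rwa [Ne, FractionalIdeal.coeIdeal_eq_zero]
      · rw [FractionalIdeal.coeIdeal_absNorm]
        rfl
      · rw [Units.val_mk0, hPcard]
        push_cast
        ring
    refine ⟨(Units.mk0 _ hPnQ) * wI, mul_mem (Subgroup.subset_closure hPmem) hwI, ?_⟩
    rw [Units.val_mul, Units.val_mk0, hwIv, _root_.map_mul]
    push_cast
    ring

lemma absNorm_frac_mem_closure (K : Type*) [Field K] [NumberField K]
    (I : FractionalIdeal (𝓞 K)⁰ K) (hI : I ≠ 0) :
    ∃ w ∈ Subgroup.closure (primePowNorms K), (w : ℚ) = FractionalIdeal.absNorm I := by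
  obtain ⟨a, J, ha, hIJ⟩ := I.exists_eq_spanSingleton_mul
  have ha' : Ideal.span {a} ≠ (0 : Ideal (𝓞 K)) := by
    rw [Ideal.zero_eq_bot, Ne, Ideal.span_singleton_eq_bot]
    exact ha
  have hJ0 : J ≠ (0 : Ideal (𝓞 K)) := by
    intro h
    apply hI
    rw [hIJ, h]
    simp
  obtain ⟨w1, hw1, hw1v⟩ := absNorm_ideal_mem_closure K (Ideal.span {a}) ha'
  obtain ⟨w2, hw2, hw2v⟩ := absNorm_ideal_mem_closure K J hJ0
  refine ⟨w1⁻¹ * w2, mul_mem (inv_mem hw1) hw2, ?_⟩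
  rw [hIJ, ← FractionalIdeal.spanSingleton_inv, ← FractionalIdeal.coeIdeal_span_singleton,
    map_mul, map_inv₀, FractionalIdeal.coeIdeal_absNorm, FractionalIdeal.coeIdeal_absNorm,
    Units.val_mul, Units.val_inv_eq_inv_val, hw1v, hw2v]

lemma nat_prod_pow_padicValNat (a : ℕ) (ha : a ≠ 0) (T : Finset ℕ)
    (hT : ∀ p ∈ T, p.Prime) (hsub : a.primeFactors ⊆ T) :
    ∏ p ∈ T, (p : ℚ) ^ ((padicValNat p a : ℤ)) = (a : ℚ) := by
  have h1 : ∏ p ∈ T, (p : ℚ) ^ ((padicValNat p a : ℤ))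
      = ((∏ p ∈ T, p ^ padicValNat p a : ℕ) : ℚ) := by
    rw [Nat.cast_prod]
    exact Finset.prod_congr rfl fun p _ => by rw [Nat.cast_pow, zpow_natCast]
  rw [h1]
  congr 1
  have h2 : ∏ p ∈ T, p ^ padicValNat p a = ∏ p ∈ a.primeFactors, p ^ padicValNat p a := by
    refine (Finset.prod_subset hsub fun p hpT hpn => ?_).symm
    rw [padicValNat.eq_zero_of_not_dvd, pow_zero]
    intro hdvd
    exact hpn (Nat.mem_primeFactors.mpr ⟨hT p hpT, hdvd, ha⟩)
  rw [h2]
  calc ∏ p ∈ a.primeFactors, p ^ padicValNat p a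
      = a.factorization.prod (· ^ ·) := by
        rw [Finsupp.prod, Nat.support_factorization]
        exact Finset.prod_congr rfl fun p hp => by
          rw [Nat.factorization_def a (Nat.prime_of_mem_primeFactors hp)]
    _ = a := Nat.factorization_prod_pow_eq_self ha

lemma prod_pow_padicValRat (r : ℚ) (hpos : 0 < r) :
    ∏ p ∈ (r.num.natAbs * r.den).primeFactors, (p : ℚ) ^ (padicValRat p r) = r := by
  have hnum : r.num ≠ 0 := Rat.num_ne_zero.mpr hpos.ne'
  have ha0 : r.num.natAbs ≠ 0 := Int.natAbs_ne_zero.mpr hnum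
  have hd0 : r.den ≠ 0 := r.den_nz
  have hT : ∀ p ∈ (r.num.natAbs * r.den).primeFactors, p.Prime :=
    fun p hp => Nat.prime_of_mem_primeFactors hp
  have hstep : ∏ p ∈ (r.num.natAbs * r.den).primeFactors, (p : ℚ) ^ (padicValRat p r)
      = (∏ p ∈ (r.num.natAbs * r.den).primeFactors, (p : ℚ) ^ ((padicValNat p r.num.natAbs : ℤ)))
        / ∏ p ∈ (r.num.natAbs * r.den).primeFactors, (p : ℚ) ^ ((padicValNat p r.den : ℤ)) := by
    rw [← Finset.prod_div_distrib]
    refine Finset.prod_congr rfl fun p hp => ?_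
    rw [show padicValRat p r = (padicValNat p r.num.natAbs : ℤ) - padicValNat p r.den by
        rw [padicValRat, padicValInt],
      zpow_sub₀ (by exact_mod_cast (hT p hp).ne_zero)]
  rw [hstep,
    nat_prod_pow_padicValNat _ ha0 _ hT
      (Nat.primeFactors_mono (dvd_mul_right _ _) (mul_ne_zero ha0 hd0)),
    nat_prod_pow_padicValNat _ hd0 _ hT
      (Nat.primeFactors_mono (dvd_mul_left _ _) (mul_ne_zero ha0 hd0))]
  have hcast : ((r.num.natAbs : ℕ) : ℚ) = ((r.num : ℤ) : ℚ) := by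
    rw [Nat.cast_natAbs]
    exact_mod_cast congrArg (fun z : ℤ => (z : ℚ)) (abs_of_pos (Rat.num_pos.mpr hpos))
  rw [hcast, Rat.num_div_den]

/-- A positive rational which is an everywhere local norm from `K` is the
norm of a nonzero fractional ideal of `K`. -/
theorem idealNorm_of_posLocalNorm (K : Type*) [Field K] [NumberField K] (u : ℚˣ)
    (hpos : 0 < (u : ℚ)) (hloc : u ∈ everywhereLocalNorms ℚ K) :
    ∃ I : FractionalIdeal (𝓞 K)⁰ K, I ≠ 0 ∧ FractionalIdeal.absNorm I = (u : ℚ) := by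
  classical
  have hfin : ∀ v : HeightOneSpectrum (𝓞 ℚ), u ∈ localNormsAt ℚ K (v.adicCompletion ℚ) := by
    have h1 := (Subgroup.mem_inf.mp hloc).1
    rw [Subgroup.mem_iInf] at h1
    exact h1
  have key : ∀ p : ℕ, p.Prime → ∃ x : K, x ≠ 0 ∧
      padicValRat p ((Algebra.norm ℚ) x) = padicValRat p (u : ℚ) := by
    intro p hp
    obtain ⟨x, hx0, hxv⟩ := exists_valuation_norm_eq K (ratPrimeSpec p hp) u (hfin _)
    refine ⟨x, hx0, ?_⟩
    have hN0 : (Algebra.norm ℚ) x ≠ 0 := by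
      rwa [Ne, Algebra.norm_eq_zero_iff]
    rw [ratPrimeSpec_valuation p hp _ hN0,
      ratPrimeSpec_valuation p hp _ (Units.ne_zero u)] at hxv
    have h2 := Multiplicative.ofAdd.injective (WithZero.coe_inj.mp hxv)
    omega
  suffices hmem : u ∈ Subgroup.closure (primePowNorms K) by
    exact (Subgroup.closure_le (idealNorms K)).mpr (fun w hw => hw.1) hmem
  set T : Finset ℕ := ((u : ℚ).num.natAbs * (u : ℚ).den).primeFactors with hT
  set f : ℕ → ℚˣ := fun p =>
    if h : (p : ℚ) ≠ 0 then (Units.mk0 (p : ℚ) h) ^ (padicValRat p (u : ℚ)) else 1 with hf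
  have hfval : ∀ p ∈ T, ((f p : ℚˣ) : ℚ) = (p : ℚ) ^ (padicValRat p (u : ℚ)) := by
    intro p hpT
    have hp0 : (p : ℚ) ≠ 0 := by
      exact_mod_cast (Nat.prime_of_mem_primeFactors hpT).ne_zero
    rw [hf]
    simp only [dif_pos hp0]
    rw [Units.val_zpow_eq_zpow_val, Units.val_mk0]
  have hfmem : ∀ p ∈ T, f p ∈ Subgroup.closure (primePowNorms K) := by
    intro p hpT
    have hp : p.Prime := Nat.prime_of_mem_primeFactors hpT
    have hp0 : (p : ℚ) ≠ 0 := by exact_mod_cast hp.ne_zero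
    rw [hf]
    simp only [dif_pos hp0]
    obtain ⟨x, hx0, hxv⟩ := key p hp
    have hN0 : (Algebra.norm ℚ) x ≠ 0 := by rwa [Ne, Algebra.norm_eq_zero_iff]
    have hsp : FractionalIdeal.spanSingleton (𝓞 K)⁰ x ≠ 0 := by
      rwa [Ne, FractionalIdeal.spanSingleton_eq_zero_iff]
    obtain ⟨w, hw, hwv⟩ := absNorm_frac_mem_closure K _ hsp
    rw [FractionalIdeal.absNorm_span_singleton] at hwv
    have hvw : padicValRat p ((w : ℚ)) = padicValRat p ((u : ℚ)) := by
      rw [hwv]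
      rcases abs_choice ((Algebra.norm ℚ) x) with h | h
      · rw [h, hxv]
      · rw [h, padicValRat.neg, hxv]
    have hpm := primePart_mem_closure hw p hp hp0
    rwa [hvw] at hpm
  have hprod : u = ∏ p ∈ T, f p := by
    ext
    rw [show ((∏ p ∈ T, f p : ℚˣ) : ℚ) = ∏ p ∈ T, ((f p : ℚˣ) : ℚ) from
      map_prod (Units.coeHom ℚ) f T]
    rw [Finset.prod_congr rfl hfval, hT, prod_pow_padicValRat _ hpos]
  rw [hprod]
  exact Subgroup.prod_mem _ hfmem
end
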